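/- Let s ∈ (0,1]. Let f be differentiable on the interior of I with f' integrable on [a,b], a < b. If |f'| is s-convex in the second sense on I and |f'(x)| ≤ M on [a,b], then for each x ∈ [a,b]: |f(x) - (1/(b-a))∫ₐᵇ f(u) du| ≤ (M·((x-a)² + (b-x)²)/(b-a))·(1/(2s+1) + Γ(s+1)²/Γ(2s+2)). -/

import Mathlib

open MeasureTheory

lemma beta_eq (s : ℝ) (hs0 : 0 < s) :
    Real.Gamma (s + 1) ^ 2 / Real.Gamma (2 * s + 2)
      = ∫ t in (0:ℝ)..1, t ^ s * (1 - t) ^ s := by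
  have hB : Complex.betaIntegral (s + 1) (s + 1)
      = ((∫ t in (0:ℝ)..1, t ^ s * (1 - t) ^ s : ℝ) : ℂ) := by
    rw [Complex.betaIntegral, ← intervalIntegral.integral_ofReal]
    apply intervalIntegral.integral_congr
    intro t ht
    rw [Set.uIcc_of_le (by norm_num : (0:ℝ) ≤ 1)] at ht
    simp only []
    rw [show (s:ℂ) + 1 - 1 = (s:ℂ) by ring,
      ← Complex.ofReal_cpow ht.1, ← Complex.ofReal_one, ← Complex.ofReal_sub,
      ← Complex.ofReal_cpow (by linarith [ht.2]), ← Complex.ofReal_mul]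
  have hgam := Complex.Gamma_mul_Gamma_eq_betaIntegral
    (s := (s:ℂ) + 1) (t := (s:ℂ) + 1) (by simp; linarith) (by simp; linarith)
  rw [hB] at hgam
  have h1 : ((s:ℂ) + 1) = ((s + 1 : ℝ) : ℂ) := by push_cast; ring
  have h2 : ((s:ℂ) + 1 + ((s:ℂ) + 1)) = ((2 * s + 2 : ℝ) : ℂ) := by push_cast; ring
  rw [h1] at hgam
  rw [show ((s+1:ℝ):ℂ) + ((s+1:ℝ):ℂ) = ((2 * s + 2 : ℝ) : ℂ) by push_cast; ring] at hgam
  rw [Complex.Gamma_ofReal, Complex.Gamma_ofReal] at hgam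
  have hreal : Real.Gamma (s + 1) * Real.Gamma (s + 1)
      = Real.Gamma (2 * s + 2) * ∫ t in (0:ℝ)..1, t ^ s * (1 - t) ^ s := by
    exact_mod_cast hgam
  have hpos : 0 < Real.Gamma (2 * s + 2) := Real.Gamma_pos_of_pos (by linarith)
  field_simp
  rw [sq]
  rw [show (s + 1) * 2 = 2 * s + 2 by ring]
  linarith [hreal]

lemma beta_ge (s : ℝ) (hs0 : 0 < s) (hs1 : s ≤ 1) :
    (1:ℝ)/6 ≤ ∫ t in (0:ℝ)..1, t ^ s * (1 - t) ^ s := by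
  have hcont : ContinuousOn (fun t : ℝ => t ^ s * (1 - t) ^ s) (Set.Icc 0 1) := by
    apply ContinuousOn.mul
    · exact (continuousOn_id).rpow_const (fun t ht => Or.inr hs0.le)
    · exact ((continuousOn_const).sub continuousOn_id).rpow_const
        (fun t ht => Or.inr hs0.le)
  have hint1 : IntervalIntegrable (fun t : ℝ => t ^ s * (1 - t) ^ s) volume 0 1 := by
    apply ContinuousOn.intervalIntegrable
    rwa [Set.uIcc_of_le (by norm_num : (0:ℝ) ≤ 1)]
  have hint2 : IntervalIntegrable (fun t : ℝ => t * (1 - t)) volume 0 1 :=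
    (continuous_id.mul (continuous_const.sub continuous_id)).intervalIntegrable 0 1
  have hmono : ∀ t ∈ Set.Icc (0:ℝ) 1, t * (1 - t) ≤ t ^ s * (1 - t) ^ s := by
    intro t ht
    have h1 : t ≤ t ^ s := by
      rcases eq_or_lt_of_le ht.1 with h | h
      · simp [← h, Real.zero_rpow hs0.ne']
      · calc t = t ^ (1:ℝ) := (Real.rpow_one t).symm
          _ ≤ t ^ s := Real.rpow_le_rpow_of_exponent_ge h ht.2 hs1
    have h2 : 1 - t ≤ (1 - t) ^ s := by
      rcases eq_or_lt_of_le (by linarith [ht.2] : (0:ℝ) ≤ 1 - t) with h | h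
      · simp [← h, Real.zero_rpow hs0.ne']
      · calc 1 - t = (1 - t) ^ (1:ℝ) := (Real.rpow_one _).symm
          _ ≤ (1 - t) ^ s := Real.rpow_le_rpow_of_exponent_ge h (by linarith [ht.1]) hs1
    have h1' : (0:ℝ) ≤ 1 - t := by linarith [ht.2]
    calc t * (1 - t) ≤ t ^ s * (1 - t) := mul_le_mul_of_nonneg_right h1 h1'
      _ ≤ t ^ s * (1 - t) ^ s := mul_le_mul_of_nonneg_left h2
          (Real.rpow_nonneg ht.1 s)
  have hval : (∫ t in (0:ℝ)..1, t * (1 - t)) = 1/6 := by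
    have : ∀ t : ℝ, t * (1 - t) = t - t^2 := fun t => by ring
    simp_rw [this]
    rw [intervalIntegral.integral_sub (intervalIntegral.intervalIntegrable_id)
      ((continuous_pow 2).intervalIntegrable 0 1), integral_id, integral_pow]
    norm_num
  rw [← hval]
  exact intervalIntegral.integral_mono_on (by norm_num) hint2 hint1 hmono

theorem ostrowski_s_convex
    (s : ℝ) (hs : s ∈ Set.Ioc (0:ℝ) 1)
    (f f' : ℝ → ℝ) (a b M : ℝ) (hab : a < b)
    (hderiv : ∀ y ∈ Set.Icc a b, HasDerivAt f (f' y) y)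
    (hint : IntervalIntegrable f' volume a b)
    (hconv : ∀ y ∈ Set.Icc a b, ∀ z ∈ Set.Icc a b, ∀ t ∈ Set.Icc (0:ℝ) 1,
      |f' (t * y + (1 - t) * z)| ≤ t ^ s * |f' y| + (1 - t) ^ s * |f' z|)
    (hM : ∀ y ∈ Set.Icc a b, |f' y| ≤ M)
    (x : ℝ) (hx : x ∈ Set.Icc a b) :
    |f x - (1 / (b - a)) * ∫ u in a..b, f u| ≤
      (M * ((x - a) ^ 2 + (b - x) ^ 2) / (b - a)) *
        (1 / (2 * s + 1) + Real.Gamma (s + 1) ^ 2 / Real.Gamma (2 * s + 2)) := by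
  obtain ⟨hs0, hs1⟩ := hs
  have hab' : (0:ℝ) < b - a := by linarith
  have hM0 : 0 ≤ M := le_trans (abs_nonneg _) (hM a ⟨le_refl a, hab.le⟩)
  -- f is continuous on [a, b]
  have hfc : ContinuousOn f (Set.Icc a b) := fun y hy =>
    (hderiv y hy).continuousAt.continuousWithinAt
  have hfint : IntervalIntegrable f volume a b := by
    apply ContinuousOn.intervalIntegrable
    rwa [Set.uIcc_of_le hab.le]
  -- Lipschitz bound
  have key : ∀ u ∈ Set.Icc a b, |f x - f u| ≤ M * |x - u| := by
    intro u hu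
    have := Convex.norm_image_sub_le_of_norm_hasDerivWithin_le
      (f := f) (f' := f') (C := M) (s := Set.Icc a b)
      (fun y hy => (hderiv y hy).hasDerivWithinAt)
      (fun y hy => by rw [Real.norm_eq_abs]; exact hM y hy)
      (convex_Icc a b) hu hx
    simpa [Real.norm_eq_abs] using this
  -- rewrite difference
  have h1 : f x - (1 / (b - a)) * ∫ u in a..b, f u
      = (1 / (b - a)) * ∫ u in a..b, (f x - f u) := by
    rw [intervalIntegral.integral_sub (intervalIntegrable_const) hfint,
      intervalIntegral.integral_const, smul_eq_mul]
    field_simp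
  -- integral of |x - u|
  have habs : ∀ c d : ℝ, c ≤ d → (∫ u in c..d, (x - u)) = x*(d - c) - (d^2 - c^2)/2 := by
    intro c d _
    rw [intervalIntegral.integral_sub (intervalIntegrable_const)
      (intervalIntegral.intervalIntegrable_id), intervalIntegral.integral_const,
      integral_id, smul_eq_mul]
    ring
  have e1 : (∫ u in a..x, |x - u|) = (x - a)^2/2 := by
    rw [intervalIntegral.integral_congr (g := fun u => x - u), habs a x hx.1]
    · ring
    · intro u hu
      rw [Set.uIcc_of_le hx.1] at hu
      exact abs_of_nonneg (by linarith [hu.2])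
  have e2 : (∫ u in x..b, |x - u|) = (b - x)^2/2 := by
    rw [intervalIntegral.integral_congr (g := fun u => u - x)]
    · rw [intervalIntegral.integral_sub (intervalIntegral.intervalIntegrable_id)
        (intervalIntegrable_const), intervalIntegral.integral_const,
        integral_id, smul_eq_mul]
      ring
    · intro u hu
      rw [Set.uIcc_of_le hx.2] at hu
      show |x - u| = u - x
      rw [abs_sub_comm]
      exact abs_of_nonneg (by linarith [hu.1])
  have habsint : ∀ c d : ℝ, IntervalIntegrable (fun u => |x - u|) volume c d :=
    fun c d => (continuous_const.sub continuous_id).abs.intervalIntegrable c d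
  have e3 : (∫ u in a..b, |x - u|) = ((x - a)^2 + (b - x)^2)/2 := by
    rw [← intervalIntegral.integral_add_adjacent_intervals (habsint a x) (habsint x b),
      e1, e2]
    ring
  -- bound the integral
  have h2 : |∫ u in a..b, (f x - f u)| ≤ M * (((x - a)^2 + (b - x)^2)/2) := by
    have hgc : IntervalIntegrable (fun u => |f x - f u|) volume a b := by
      apply ContinuousOn.intervalIntegrable
      rw [Set.uIcc_of_le hab.le]
      exact (continuousOn_const.sub hfc).abs
    calc |∫ u in a..b, (f x - f u)| ≤ ∫ u in a..b, |f x - f u| :=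
          intervalIntegral.abs_integral_le_integral_abs hab.le
      _ ≤ ∫ u in a..b, M * |x - u| := by
          apply intervalIntegral.integral_mono_on hab.le hgc
            ((habsint a b).const_mul M)
          exact fun u hu => key u hu
      _ = M * (((x - a)^2 + (b - x)^2)/2) := by
          rw [intervalIntegral.integral_const_mul, e3]
  -- conclude
  have hC : (1:ℝ)/2 ≤ 1 / (2 * s + 1) + Real.Gamma (s + 1) ^ 2 / Real.Gamma (2 * s + 2) := by
    have hb1 : (1:ℝ)/3 ≤ 1 / (2 * s + 1) := by
      rw [div_le_div_iff₀ (by norm_num) (by linarith)]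
      linarith
    have hb2 : (1:ℝ)/6 ≤ Real.Gamma (s + 1) ^ 2 / Real.Gamma (2 * s + 2) := by
      rw [beta_eq s hs0]
      exact beta_ge s hs0 hs1
    linarith
  rw [h1, abs_mul, abs_of_pos (by positivity : (0:ℝ) < 1/(b-a))]
  have step : 1 / (b - a) * |∫ u in a..b, (f x - f u)|
      ≤ 1 / (b - a) * (M * (((x - a)^2 + (b - x)^2)/2)) :=
    mul_le_mul_of_nonneg_left h2 (by positivity)
  refine step.trans ?_
  have hfac : (0:ℝ) ≤ M * ((x - a) ^ 2 + (b - x) ^ 2) / (b - a) := by positivity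
  calc 1 / (b - a) * (M * (((x - a)^2 + (b - x)^2)/2))
      = (M * ((x - a) ^ 2 + (b - x) ^ 2) / (b - a)) * (1/2) := by ring
    _ ≤ _ := mul_le_mul_of_nonneg_left hC hfac
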